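/- Let σ : U → V be a C² diffeomorphism between open sets of Banach spaces E, F, and let Γ_β : U → L(E, L(E,E)) and Γ_α : V → L(F, L(F,F)) be smooth maps satisfying the compatibility condition Γ_α(σ(y))(dσ(y)u)(dσ(y)v) + d²σ(y)(u,v) = dσ(y)(Γ_β(y)(u)(v)) for all y ∈ U, u, v ∈ E. Then for any smooth curve f in U through x, setting u = f'(0), v = f''(0) + Γ_β(x)(u)(u), the transformed data satisfy (σ∘f)'(0) = dσ(x)(u) and (σ∘f)''(0) + Γ_α(σ(x))((σ∘f)'(0))((σ∘f)'(0)) = dσ(x)(v). -/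

import Mathlib

open scoped ContDiff

/-- key computation for the transition functions of `T²M`.  If the Christoffel
symbols `Γ_α`, `Γ_β` satisfy the compatibility condition (1) with respect to a C²
diffeomorphism `σ : U → V`, then for a smooth curve `f` through `x ∈ U`, setting
`u = f'(0)` and `v = f''(0) + Γ_β(x)(u)(u)`, one has `(σ∘f)'(0) = dσ(x)(u)` and
`(σ∘f)''(0) + Γ_α(σ(x))((σ∘f)'(0))((σ∘f)'(0)) = dσ(x)(v)`. -/
theorem connection_transition_computation
    {E F : Type*} [NormedAddCommGroup E] [NormedSpace ℝ E]
    [NormedAddCommGroup F] [NormedSpace ℝ F]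
    {U : Set E} {V : Set F} (hU : IsOpen U) (hV : IsOpen V)
    {σ : E → F} {τ : F → E} (hσ : ContDiffOn ℝ 2 σ U) (hτ : ContDiffOn ℝ 2 τ V)
    (hσV : Set.MapsTo σ U V) (hτU : Set.MapsTo τ V U)
    (hlr : ∀ y ∈ U, τ (σ y) = y) (hrl : ∀ z ∈ V, σ (τ z) = z)
    {Γβ : E → E →L[ℝ] E →L[ℝ] E} {Γα : F → F →L[ℝ] F →L[ℝ] F}
    (hΓβ : ContDiffOn ℝ ∞ Γβ U) (hΓα : ContDiffOn ℝ ∞ Γα V)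
    (hcompat : ∀ y ∈ U, ∀ u v : E,
      Γα (σ y) (fderiv ℝ σ y u) (fderiv ℝ σ y v) + fderiv ℝ (fderiv ℝ σ) y v u =
        fderiv ℝ σ y (Γβ y u v))
    {f : ℝ → E} (hf : ContDiff ℝ ∞ f) (hfU : ∀ t, f t ∈ U) {x : E} (hx : f 0 = x)
    (hxU : x ∈ U) :
    deriv (σ ∘ f) 0 = fderiv ℝ σ x (deriv f 0) ∧
      deriv (deriv (σ ∘ f)) 0 + Γα (σ x) (deriv (σ ∘ f) 0) (deriv (σ ∘ f) 0) =
        fderiv ℝ σ x (deriv (deriv f) 0 + Γβ x (deriv f 0) (deriv f 0)) := by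
  -- f is differentiable with derivative deriv f
  have hfd : ∀ t : ℝ, HasDerivAt f (deriv f t) t := fun t =>
    ((hf.differentiable (by norm_num)) t).hasDerivAt
  -- σ differentiable at each f t
  have hσd : ∀ t : ℝ, DifferentiableAt ℝ σ (f t) := fun t =>
    ((hσ.differentiableOn (by norm_num)) (f t) (hfU t)).differentiableAt
      (hU.mem_nhds (hfU t))
  -- first derivative of σ ∘ f
  have h1 : ∀ t : ℝ, HasDerivAt (σ ∘ f) (fderiv ℝ σ (f t) (deriv f t)) t := fun t =>
    ((hσd t).hasFDerivAt).comp_hasDerivAt t (hfd t)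
  have hderiv1 : deriv (σ ∘ f) = fun t => fderiv ℝ σ (f t) (deriv f t) :=
    funext fun t => (h1 t).deriv
  -- fderiv σ is C¹ on U, hence differentiable at x
  have hσ' : ContDiffOn ℝ 1 (fderiv ℝ σ) U :=
    hσ.fderiv_of_isOpen hU (by norm_num)
  have hσ'd : DifferentiableAt ℝ (fderiv ℝ σ) x :=
    ((hσ'.differentiableOn (by norm_num)) x hxU).differentiableAt (hU.mem_nhds hxU)
  -- deriv f is differentiable (f is C∞)
  have hdf : ContDiff ℝ ∞ (deriv f) := by
    have : ContDiff ℝ (∞ + 1) f := by exact_mod_cast hf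
    exact (contDiff_succ_iff_deriv.1 this).2.2
  have hdfd : HasDerivAt (deriv f) (deriv (deriv f) 0) 0 :=
    ((hdf.differentiable (by norm_num)) 0).hasDerivAt
  -- t ↦ fderiv σ (f t) has derivative fderiv (fderiv σ) x (deriv f 0) at 0
  have hc : HasDerivAt (fun t => fderiv ℝ σ (f t))
      (fderiv ℝ (fderiv ℝ σ) x (deriv f 0)) 0 := by
    have hh : HasFDerivAt (fderiv ℝ σ) (fderiv ℝ (fderiv ℝ σ) x) (f 0) := by
      rw [hx]; exact hσ'd.hasFDerivAt
    have := hh.comp_hasDerivAt 0 (hfd 0)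
    exact this
  -- second derivative of σ ∘ f
  have h2 : HasDerivAt (deriv (σ ∘ f))
      (fderiv ℝ (fderiv ℝ σ) x (deriv f 0) (deriv f 0) +
        fderiv ℝ σ x (deriv (deriv f) 0)) 0 := by
    rw [hderiv1]
    have := hc.clm_apply hdfd
    simpa [hx] using this
  constructor
  · rw [(h1 0).deriv, hx]
  · rw [h2.deriv, (h1 0).deriv, hx]
    have hco := hcompat x hxU (deriv f 0) (deriv f 0)
    rw [map_add, ← hco]
    abel
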